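/- Compression does not increase the absolute values of chromatic coefficients: let G be a finite simple graph on n vertices, let u and v be distinct vertices of G, and let G' = G_{u→v} be the compression of G from u to v. Writing P_G(λ) = Σ_{i=0}^{n} c_i(G) λ^i and P_{G'}(λ) = Σ_{i=0}^{n} c_i(G') λ^i, then |c_i(G')| ≤ |c_i(G)| for all i with 0 ≤ i ≤ n. -/

import Mathlib

open Polynomial

/-- The number of proper colorings of the finite simple graph `G` with `k` colors. -/
def SimpleGraph.numColorings {V : Type*} [Fintype V] [DecidableEq V]
    (G : SimpleGraph V) [DecidableRel G.Adj] (k : ℕ) : ℕ :=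
  Fintype.card {f : V → Fin k // ∀ a b, G.Adj a b → f a ≠ f b}

/-- The compression `G_{u→v}` of the simple graph `G` from vertex `u` to vertex `v`:
for each vertex `x` adjacent to `u` but neither adjacent nor equal to `v`, the edge
`{x, u}` is deleted and the edge `{x, v}` is added. -/
def SimpleGraph.compress {V : Type*} [DecidableEq V] (G : SimpleGraph V) (u v : V) :
    SimpleGraph V where
  Adj x y :=
    (G.Adj x y ∧ ¬(x = u ∧ G.Adj u y ∧ ¬G.Adj v y ∧ y ≠ v) ∧
      ¬(y = u ∧ G.Adj u x ∧ ¬G.Adj v x ∧ x ≠ v)) ∨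
    (x = v ∧ G.Adj u y ∧ ¬G.Adj v y ∧ y ≠ v) ∨
    (y = v ∧ G.Adj u x ∧ ¬G.Adj v x ∧ x ≠ v)
  symm := ⟨fun x y h => by
    rcases h with ⟨h1, h2, h3⟩ | h | h
    · exact Or.inl ⟨h1.symm, h3, h2⟩
    · exact Or.inr (Or.inr h)
    · exact Or.inr (Or.inl h)⟩
  loopless := ⟨fun x => by
    rintro (⟨h, -, -⟩ | ⟨rfl, -, -, h⟩ | ⟨rfl, -, -, h⟩)
    · exact G.loopless.irrefl x h
    · exact h rfl
    · exact h rfl⟩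

instance {V : Type*} [DecidableEq V] (G : SimpleGraph V) [DecidableRel G.Adj] (u v : V) :
    DecidableRel (G.compress u v).Adj := fun x y => by
  dsimp only [SimpleGraph.compress]; infer_instance

namespace ChromAux

theorem poly_unique {p q : Polynomial ℤ}
    (h : ∀ k : ℕ, p.eval (k : ℤ) = q.eval (k : ℤ)) : p = q := by
  apply Polynomial.eq_of_infinite_eval_eq
  apply Set.infinite_of_injective_forall_mem (f := ((↑) : ℕ → ℤ))
    (hi := Nat.cast_injective)
  exact fun a => h a

variable {V : Type*} [Fintype V] [DecidableEq V]

/-- delete the edge u-a -/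
def del (G : SimpleGraph V) (u a : V) : SimpleGraph V where
  Adj x y := G.Adj x y ∧ ¬(x = u ∧ y = a) ∧ ¬(x = a ∧ y = u)
  symm := ⟨fun x y h => ⟨h.1.symm, fun hc => h.2.2 ⟨hc.2, hc.1⟩, fun hc => h.2.1 ⟨hc.2, hc.1⟩⟩⟩
  loopless := ⟨fun x h => G.loopless.irrefl x h.1⟩

instance (G : SimpleGraph V) [DecidableRel G.Adj] (u a : V) :
    DecidableRel (del G u a).Adj := fun x y => by
  dsimp only [del]; infer_instance

/-- contract the edge u-a, keeping the vertex u -/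
def con (G : SimpleGraph V) (u a : V) : SimpleGraph {x : V // x ≠ a} where
  Adj x y := x.1 ≠ y.1 ∧
    (G.Adj x.1 y.1 ∨ (x.1 = u ∧ G.Adj a y.1) ∨ (y.1 = u ∧ G.Adj a x.1))
  symm := ⟨fun x y h => ⟨h.1.symm, by rcases h.2 with h' | h' | h'
                                      · exact Or.inl h'.symm
                                      · exact Or.inr (Or.inr h')
                                      · exact Or.inr (Or.inl h')⟩⟩
  loopless := ⟨fun x h => h.1 rfl⟩

instance (G : SimpleGraph V) [DecidableRel G.Adj] (u a : V) :
    DecidableRel (con G u a).Adj := fun x y => by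
  dsimp only [con]; infer_instance

theorem del_adj (G : SimpleGraph V) (u a x y : V) :
    (del G u a).Adj x y ↔ G.Adj x y ∧ ¬(x = u ∧ y = a) ∧ ¬(x = a ∧ y = u) := Iff.rfl

theorem con_adj (G : SimpleGraph V) (u a : V) (x y : {x : V // x ≠ a}) :
    (con G u a).Adj x y ↔ x.1 ≠ y.1 ∧
      (G.Adj x.1 y.1 ∨ (x.1 = u ∧ G.Adj a y.1) ∨ (y.1 = u ∧ G.Adj a x.1)) := Iff.rfl

theorem compress_adj (G : SimpleGraph V) (u v x y : V) :
    (G.compress u v).Adj x y ↔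
    (G.Adj x y ∧ ¬(x = u ∧ G.Adj u y ∧ ¬G.Adj v y ∧ y ≠ v) ∧
      ¬(y = u ∧ G.Adj u x ∧ ¬G.Adj v x ∧ x ≠ v)) ∨
    (x = v ∧ G.Adj u y ∧ ¬G.Adj v y ∧ y ≠ v) ∨
    (y = v ∧ G.Adj u x ∧ ¬G.Adj v x ∧ x ≠ v) := Iff.rfl

def m (G : SimpleGraph V) [DecidableRel G.Adj] : ℕ :=
  (Finset.univ.filter fun p : V × V => G.Adj p.1 p.2).card

def μ (G : SimpleGraph V) [DecidableRel G.Adj] : ℕ :=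
  4 ^ (Fintype.card V) + m G

theorem numColorings_congr {G₁ G₂ : SimpleGraph V} [DecidableRel G₁.Adj]
    [DecidableRel G₂.Adj] (h : ∀ x y, G₁.Adj x y ↔ G₂.Adj x y) (k : ℕ) :
    G₁.numColorings k = G₂.numColorings k := by
  refine Fintype.card_congr (Equiv.subtypeEquivRight (fun f => ?_))
  constructor
  · exact fun hf a b hab => hf a b ((h a b).mpr hab)
  · exact fun hf a b hab => hf a b ((h a b).mp hab)

theorem m_lt_of_lt {G₁ G₂ : SimpleGraph V} [DecidableRel G₁.Adj] [DecidableRel G₂.Adj]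
    {u a : V} (hle : ∀ x y, G₁.Adj x y → G₂.Adj x y) (h2 : G₂.Adj u a)
    (h1 : ¬G₁.Adj u a) : m G₁ < m G₂ := by
  apply Finset.card_lt_card
  constructor
  · intro p hp
    simp only [Finset.mem_filter, Finset.mem_univ, true_and] at hp ⊢
    exact hle _ _ hp
  · intro hsub
    have := hsub (Finset.mem_filter.mpr ⟨Finset.mem_univ ((u, a) : V × V), h2⟩)
    simp only [Finset.mem_filter] at this
    exact h1 this.2

theorem m_del_lt (G : SimpleGraph V) [DecidableRel G.Adj] {u a : V} (h : G.Adj u a) :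
    m (del G u a) < m G :=
  m_lt_of_lt (fun _ _ hxy => hxy.1) h (fun hc => hc.2.1 ⟨rfl, rfl⟩)

theorem card_subtype_ne (a : V) : Fintype.card {x : V // x ≠ a} + 1 = Fintype.card V := by
  have h1 : Fintype.card {x : V // ¬ x = a} = Fintype.card V - Fintype.card {x : V // x = a} :=
    Fintype.card_subtype_compl _
  have h2 : Fintype.card {x : V // x = a} = 1 := Fintype.card_subtype_eq a
  have h3 : 0 < Fintype.card V := Fintype.card_pos_iff.mpr ⟨a⟩
  have : Fintype.card {x : V // x ≠ a} = Fintype.card V - 1 := by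
    rw [← h2, ← h1]
  omega

theorem μ_con_lt (G : SimpleGraph V) [DecidableRel G.Adj] {u a : V} (h : G.Adj u a) :
    μ (con G u a) < μ G := by
  set c := Fintype.card {x : V // x ≠ a}
  have hc : c + 1 = Fintype.card V := card_subtype_ne a
  have hm : m (con G u a) ≤ c * c := by
    calc m (con G u a) ≤ (Finset.univ : Finset ({x : V // x ≠ a} × {x : V // x ≠ a})).card :=
          Finset.card_filter_le _ _
      _ = c * c := by rw [Finset.card_univ, Fintype.card_prod]
  have h2 : c < 2 ^ c := Nat.lt_two_pow_self
  have h4 : c * c < 4 ^ c := by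
    calc c * c < 2 ^ c * 2 ^ c := by
          rcases Nat.eq_zero_or_pos c with hc0 | hpos
          · rw [hc0]; norm_num
          · exact Nat.mul_lt_mul_of_lt_of_le h2 h2.le (by positivity)
      _ = 4 ^ c := by rw [← Nat.mul_pow]
  have h5 : μ (con G u a) = 4 ^ c + m (con G u a) := rfl
  have : μ (con G u a) < 2 * 4 ^ c := by omega
  calc μ (con G u a) < 2 * 4 ^ c := this
    _ ≤ 4 ^ (c + 1) := by rw [pow_succ]; omega
    _ = 4 ^ Fintype.card V := by rw [hc]
    _ ≤ μ G := Nat.le_add_right _ _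

theorem count_del (G : SimpleGraph V) [DecidableRel G.Adj] {u a : V} (h : G.Adj u a) (k : ℕ) :
    (del G u a).numColorings k = G.numColorings k + (con G u a).numColorings k := by
  have hua : u ≠ a := G.ne_of_adj h
  set Pdel : (V → Fin k) → Prop := fun f => ∀ x y, (del G u a).Adj x y → f x ≠ f y with hPdel
  have e2 : {f : V → Fin k // Pdel f ∧ f u ≠ f a} ≃
      {f : V → Fin k // ∀ x y, G.Adj x y → f x ≠ f y} := by
    refine Equiv.subtypeEquivRight (fun f => ?_)
    constructor
    · rintro ⟨hdel, hne⟩ x y hxy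
      by_cases hx : x = u ∧ y = a
      · rw [hx.1, hx.2]; exact hne
      · by_cases hy : x = a ∧ y = u
        · rw [hy.1, hy.2]; exact hne.symm
        · exact hdel x y ⟨hxy, hx, hy⟩
    · intro hf
      exact ⟨fun x y hxy => hf x y hxy.1, hf u a h⟩
  have e3 : {f : V → Fin k // Pdel f ∧ f u = f a} ≃
      {g : {x : V // x ≠ a} → Fin k // ∀ x y, (con G u a).Adj x y → g x ≠ g y} := by
    refine ⟨fun f => ⟨fun x => f.1 x.1, ?_⟩,
           fun g => ⟨fun x => if hx : x = a then g.1 ⟨u, hua⟩ else g.1 ⟨x, hx⟩, ?_, ?_⟩,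
           ?_, ?_⟩
    · rintro x y ⟨hne, hG | ⟨hxu, hay⟩ | ⟨hyu, hax⟩⟩ <;> show f.1 x.1 ≠ f.1 y.1
      · exact f.2.1 x.1 y.1 ⟨hG, fun hc => y.2 hc.2, fun hc => x.2 hc.1⟩
      · have h1 : f.1 x.1 = f.1 a := by rw [hxu]; exact f.2.2
        rw [h1]
        exact f.2.1 a y.1 ⟨hay, fun hc => hua hc.1.symm,
          fun hc => hne (hxu.trans hc.2.symm)⟩
      · have h1 : f.1 y.1 = f.1 a := by rw [hyu]; exact f.2.2
        rw [h1]
        exact (f.2.1 a x.1 ⟨hax, fun hc => hua hc.1.symm,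
          fun hc => hne (hc.2.trans hyu.symm)⟩).symm
    · rintro x y ⟨hG, hnd1, hnd2⟩
      dsimp only
      by_cases hx : x = a
      · by_cases hy : y = a
        · exact absurd hG (by rw [hx, hy]; exact G.loopless.irrefl a)
        · rw [dif_pos hx, dif_neg hy]
          refine g.2 ⟨u, hua⟩ ⟨y, hy⟩ ⟨?_, Or.inr (Or.inl ⟨rfl, hx ▸ hG⟩)⟩
          intro hc; exact hnd2 ⟨hx, hc.symm⟩
      · by_cases hy : y = a
        · rw [dif_neg hx, dif_pos hy]
          refine g.2 ⟨x, hx⟩ ⟨u, hua⟩ ⟨?_, Or.inr (Or.inr ⟨rfl, (hy ▸ hG).symm⟩)⟩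
          intro hc; exact hnd1 ⟨hc, hy⟩
        · rw [dif_neg hx, dif_neg hy]
          exact g.2 ⟨x, hx⟩ ⟨y, hy⟩ ⟨G.ne_of_adj hG, Or.inl hG⟩
    · dsimp only; rw [dif_neg hua, dif_pos rfl]
    · rintro ⟨f, hf, hfeq⟩
      refine Subtype.ext (funext fun x => ?_)
      by_cases hx : x = a
      · simp only [dif_pos hx]; rw [hx]; exact hfeq.symm ▸ rfl
      · simp only [dif_neg hx]
    · rintro ⟨g, hg⟩
      refine Subtype.ext (funext fun x => ?_)
      simp only [dif_neg x.2]
  have hsplit : Fintype.card {f : V → Fin k // Pdel f} =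
      Fintype.card {f : V → Fin k // Pdel f ∧ f u = f a}
      + Fintype.card {f : V → Fin k // Pdel f ∧ f u ≠ f a} := by
    rw [Fintype.card_subtype, Fintype.card_subtype, Fintype.card_subtype,
      ← Finset.filter_filter, ← Finset.filter_filter]
    exact (Finset.card_filter_add_card_filter_not
      (s := Finset.filter Pdel Finset.univ) (p := fun f => f u = f a)).symm
  have : (del G u a).numColorings k = Fintype.card {f : V → Fin k // Pdel f} := rfl
  rw [this, hsplit, Fintype.card_congr e2, Fintype.card_congr e3]
  exact Nat.add_comm _ _

theorem numColorings_no_edge (G : SimpleGraph V) [DecidableRel G.Adj]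
    (hE : ∀ x y, ¬G.Adj x y) (k : ℕ) : G.numColorings k = k ^ Fintype.card V := by
  have : G.numColorings k = Fintype.card (V → Fin k) :=
    Fintype.card_congr (Equiv.subtypeUnivEquiv (fun f x y hxy => absurd hxy (hE x y)))
  rw [this, Fintype.card_fun, Fintype.card_fin]

universe uu

theorem exists_chrom : ∀ (N : ℕ) {V : Type uu} [Fintype V] [DecidableEq V]
    (G : SimpleGraph V), ∀ [DecidableRel G.Adj], μ G ≤ N →
    ∃ p : ℤ[X], (∀ k : ℕ, p.eval (k : ℤ) = G.numColorings k) ∧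
      ∀ i, 0 ≤ (-1 : ℤ) ^ (Fintype.card V + i) * p.coeff i := by
  intro N
  induction N using Nat.strong_induction_on with
  | _ N ih =>
    intro V _ _ G _ hμ
    by_cases hE : ∃ p : V × V, G.Adj p.1 p.2
    · obtain ⟨⟨u, a⟩, hadj⟩ := hE
      replace hadj : G.Adj u a := hadj
      obtain ⟨q, hq, hq2⟩ := ih (μ (del G u a))
        (lt_of_lt_of_le (by unfold μ; have := m_del_lt G hadj; omega) hμ)
        (del G u a) le_rfl
      obtain ⟨r, hr, hr2⟩ := ih (μ (con G u a))
        (lt_of_lt_of_le (μ_con_lt G hadj) hμ) (con G u a) le_rfl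
      refine ⟨q - r, fun k => ?_, fun i => ?_⟩
      · have hc := count_del G hadj k
        have hcz : ((del G u a).numColorings k : ℤ)
            = (G.numColorings k : ℤ) + ((con G u a).numColorings k : ℤ) := by
          exact_mod_cast congrArg (Nat.cast : ℕ → ℤ) hc
        rw [eval_sub, hq, hr]
        linarith
      · have hsign : (-1 : ℤ) ^ (Fintype.card V + i)
            = -(-1 : ℤ) ^ (Fintype.card {x : V // x ≠ a} + i) := by
          rw [← card_subtype_ne a, show Fintype.card {x : V // x ≠ a} + 1 + i
            = (Fintype.card {x : V // x ≠ a} + i) + 1 from by omega, pow_succ]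
          ring
        rw [coeff_sub, mul_sub, hsign]
        linarith [hsign ▸ hq2 i, hr2 i]
    · push_neg at hE
      refine ⟨X ^ Fintype.card V, fun k => ?_, fun i => ?_⟩
      · rw [numColorings_no_edge G (fun x y => hE (x, y)) k]
        push_cast
        simp
      · rw [coeff_X_pow]
        by_cases hi : i = Fintype.card V
        · rw [if_pos hi, mul_one, hi,
            Even.neg_one_pow (⟨Fintype.card V, rfl⟩ : Even (Fintype.card V + Fintype.card V))]
          norm_num
        · rw [if_neg hi, mul_zero]

/-- monotonicity: a subgraph has (absolutely) smaller chromatic coefficients -/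
theorem mono : ∀ (M : ℕ) {V : Type uu} [Fintype V] [DecidableEq V]
    (G₁ G₂ : SimpleGraph V), ∀ [DecidableRel G₁.Adj] [DecidableRel G₂.Adj],
    m G₂ ≤ M → (∀ x y, G₁.Adj x y → G₂.Adj x y) →
    ∀ (p₁ p₂ : ℤ[X]), (∀ k : ℕ, p₁.eval (k : ℤ) = G₁.numColorings k) →
    (∀ k : ℕ, p₂.eval (k : ℤ) = G₂.numColorings k) →
    ∀ i, (-1 : ℤ) ^ (Fintype.card V + i) * p₁.coeff i
        ≤ (-1 : ℤ) ^ (Fintype.card V + i) * p₂.coeff i := by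
  intro M
  induction M using Nat.strong_induction_on with
  | _ M ih =>
    intro V _ _ G₁ G₂ _ _ hM hle p₁ p₂ hp₁ hp₂ i
    by_cases hEq : ∀ x y, G₁.Adj x y ↔ G₂.Adj x y
    · have : p₁ = p₂ := poly_unique (fun k => by rw [hp₁, hp₂, numColorings_congr hEq])
      rw [this]
    · push_neg at hEq
      obtain ⟨x, y, hxy⟩ := hEq
      have hd : ¬G₁.Adj x y ∧ G₂.Adj x y := by
        by_cases hA : G₁.Adj x y <;> by_cases hB : G₂.Adj x y <;> tauto
      obtain ⟨h1, h2⟩ := hd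
      have hle' : ∀ s t, G₁.Adj s t → (del G₂ x y).Adj s t := by
        intro s t hst
        refine ⟨hle s t hst, ?_, ?_⟩
        · rintro ⟨rfl, rfl⟩; exact h1 hst
        · rintro ⟨rfl, rfl⟩; exact h1 hst.symm
      obtain ⟨p₃, hp₃, -⟩ := exists_chrom (μ (del G₂ x y)) (del G₂ x y) le_rfl
      obtain ⟨r, hr, hr2⟩ := exists_chrom (μ (con G₂ x y)) (con G₂ x y) le_rfl
      have hp2eq : p₂ = p₃ - r := by
        apply poly_unique
        intro k
        rw [eval_sub, hp₃, hr, hp₂]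
        have hc := count_del G₂ h2 k
        have hcz : ((del G₂ x y).numColorings k : ℤ)
            = (G₂.numColorings k : ℤ) + ((con G₂ x y).numColorings k : ℤ) := by
          exact_mod_cast congrArg (Nat.cast : ℕ → ℤ) hc
        linarith
      have hstep := ih (m (del G₂ x y))
        (lt_of_lt_of_le (m_del_lt G₂ h2) hM) G₁ (del G₂ x y) le_rfl hle' p₁ p₃ hp₁ hp₃ i
      have hsign : (-1 : ℤ) ^ (Fintype.card V + i)
          = -(-1 : ℤ) ^ (Fintype.card {z : V // z ≠ y} + i) := by
        rw [← card_subtype_ne y, show Fintype.card {z : V // z ≠ y} + 1 + i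
          = (Fintype.card {z : V // z ≠ y} + i) + 1 from by omega, pow_succ]
        ring
      rw [hp2eq, coeff_sub, mul_sub]
      have hr2i := hr2 i
      have hneg : (-1 : ℤ) ^ (Fintype.card V + i) * r.coeff i ≤ 0 := by
        rw [hsign]; linarith
      linarith

end ChromAux
section Part2
open Polynomial ChromAux
namespace ChromAux
variable {V : Type*} [Fintype V] [DecidableEq V]

theorem F2 (G : SimpleGraph V) {u v a : V} (huv : u ≠ v)
    (ha1 : G.Adj u a) (ha2 : ¬G.Adj v a) (ha3 : a ≠ v) (x y : V) :
    (del (G.compress u v) v a).Adj x y ↔ ((del G u a).compress u v).Adj x y := by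
  have hua : u ≠ a := G.ne_of_adj ha1
  have ha2' : ¬G.Adj a v := fun h => ha2 h.symm
  constructor
  · rintro ⟨hG', hnd1, hnd2⟩
    rcases hG' with ⟨hxy, hn1, hn2⟩ | ⟨hxv, hNy⟩ | ⟨hyv, hNx⟩
    · refine Or.inl ⟨⟨hxy, ?_, ?_⟩, ?_, ?_⟩
      · rintro ⟨hxu, hya⟩
        exact hn1 ⟨hxu, by rw [hya]; exact ha1, by rw [hya]; exact ha2,
          by rw [hya]; exact ha3⟩
      · rintro ⟨hxa, hyu⟩
        exact hn2 ⟨hyu, by rw [hxa]; exact ha1, by rw [hxa]; exact ha2,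
          by rw [hxa]; exact ha3⟩
      · rintro ⟨hxu, hDuy, hDvy, hyv⟩
        exact hn1 ⟨hxu, hDuy.1,
          fun h => hDvy ⟨h, fun hc => huv hc.1.symm, fun hc => ha3 hc.1.symm⟩, hyv⟩
      · rintro ⟨hyu, hDux, hDvx, hxv⟩
        exact hn2 ⟨hyu, hDux.1,
          fun h => hDvx ⟨h, fun hc => huv hc.1.symm, fun hc => ha3 hc.1.symm⟩, hxv⟩
    · have hyna : y ≠ a := fun hya => hnd1 ⟨hxv, hya⟩
      exact Or.inr (Or.inl ⟨hxv,
        ⟨hNy.1, fun hc => hyna hc.2, fun hc => hua hc.1⟩,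
        fun h => hNy.2.1 h.1, hNy.2.2⟩)
    · have hxna : x ≠ a := fun hxa => hnd2 ⟨hxa, hyv⟩
      exact Or.inr (Or.inr ⟨hyv,
        ⟨hNx.1, fun hc => hxna hc.2, fun hc => hua hc.1⟩,
        fun h => hNx.2.1 h.1, hNx.2.2⟩)
  · rintro (⟨⟨hxy, hd1, hd2⟩, hm1, hm2⟩ | ⟨hxv, hDuy, hDvy, hyv⟩ | ⟨hyv, hDux, hDvx, hxv⟩)
    · refine ⟨Or.inl ⟨hxy, ?_, ?_⟩, ?_, ?_⟩
      · rintro ⟨hxu, hGuy, hGvy, hyv⟩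
        by_cases hya : y = a
        · exact hd1 ⟨hxu, hya⟩
        · exact hm1 ⟨hxu, ⟨hGuy, fun hc => hya hc.2, fun hc => hua hc.1⟩,
            fun h => hGvy h.1, hyv⟩
      · rintro ⟨hyu, hGux, hGvx, hxv⟩
        by_cases hxa : x = a
        · exact hd2 ⟨hxa, hyu⟩
        · exact hm2 ⟨hyu, ⟨hGux, fun hc => hxa hc.2, fun hc => hua hc.1⟩,
            fun h => hGvx h.1, hxv⟩
      · rintro ⟨hxv, hya⟩
        apply ha2
        rw [← hxv, ← hya]
        exact hxy
      · rintro ⟨hxa, hyv⟩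
        apply ha2'
        rw [← hxa, ← hyv]
        exact hxy
    · have hGuy : G.Adj u y := hDuy.1
      have hyna : y ≠ a := fun hya => hDuy.2.1 ⟨rfl, hya⟩
      have hGvy : ¬G.Adj v y :=
        fun h => hDvy ⟨h, fun hc => huv hc.1.symm, fun hc => ha3 hc.1.symm⟩
      refine ⟨Or.inr (Or.inl ⟨hxv, hGuy, hGvy, hyv⟩), ?_, ?_⟩
      · rintro ⟨-, hya⟩; exact hyna hya
      · rintro ⟨hxa, -⟩; exact ha3 (hxa.symm.trans hxv)
    · have hGux : G.Adj u x := hDux.1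
      have hxna : x ≠ a := fun hxa => hDux.2.1 ⟨rfl, hxa⟩
      have hGvx : ¬G.Adj v x :=
        fun h => hDvx ⟨h, fun hc => huv hc.1.symm, fun hc => ha3 hc.1.symm⟩
      refine ⟨Or.inr (Or.inr ⟨hyv, hGux, hGvx, hxv⟩), ?_, ?_⟩
      · rintro ⟨-, hya⟩; exact ha3 (hya.symm.trans hyv)
      · rintro ⟨hxa, -⟩; exact hxna hxa

theorem F3 (G : SimpleGraph V) {u v a : V} (huv : u ≠ v)
    (ha1 : G.Adj u a) (ha2 : ¬G.Adj v a) (ha3 : a ≠ v) (x y : {z : V // z ≠ a}) :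
    (con (G.compress u v) v a).Adj x y →
    ((con G u a).compress ⟨u, G.ne_of_adj ha1⟩ ⟨v, Ne.symm ha3⟩).Adj x y := by
  have hua : u ≠ a := G.ne_of_adj ha1
  have hva : v ≠ a := Ne.symm ha3
  have ha2' : ¬G.Adj a v := fun h => ha2 h.symm
  set ut : {z : V // z ≠ a} := ⟨u, hua⟩ with hut
  set vt : {z : V // z ≠ a} := ⟨v, hva⟩ with hvt
  set C := con G u a with hC
  -- helper characterizations
  have hCu : ∀ z : {z : V // z ≠ a}, C.Adj ut z ↔
      (u ≠ z.1 ∧ (G.Adj u z.1 ∨ G.Adj a z.1)) := by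
    intro z
    constructor
    · rintro ⟨hne, h | ⟨-, h⟩ | ⟨hzu, -⟩⟩
      · exact ⟨hne, Or.inl h⟩
      · exact ⟨hne, Or.inr h⟩
      · exact absurd hzu.symm hne
    · rintro ⟨hne, h | h⟩
      · exact ⟨hne, Or.inl h⟩
      · exact ⟨hne, Or.inr (Or.inl ⟨rfl, h⟩)⟩
  have hCv : ∀ z : {z : V // z ≠ a}, C.Adj vt z ↔ G.Adj v z.1 := by
    intro z
    constructor
    · rintro ⟨hne, h | ⟨hvu, -⟩ | ⟨-, hav⟩⟩
      · exact h
      · exact absurd hvu.symm huv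
      · exact absurd hav ha2'
    · intro h
      exact ⟨G.ne_of_adj h, Or.inl h⟩
  intro hadj
  obtain ⟨hne, hcase⟩ := hadj
  rcases hcase with hG' | ⟨hxv, hG'ay⟩ | ⟨hyv, hG'ax⟩
  · -- a compress-G edge between x and y
    rcases hG' with ⟨hxy, hn1, hn2⟩ | ⟨hxv, hNy⟩ | ⟨hyv, hNx⟩
    · refine Or.inl ⟨⟨hne, Or.inl hxy⟩, ?_, ?_⟩
      · rintro ⟨hxu, hCuy, hCvy, hyvt⟩
        have hxu' : x.1 = u := congrArg Subtype.val hxu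
        refine hn1 ⟨hxu', (hCu y).mp hCuy |>.2.elim id (fun _ => by rw [← hxu']; exact hxy) , ?_, ?_⟩
        · exact fun h => hCvy ((hCv y).mpr h)
        · exact fun h => hyvt (Subtype.ext h)
      · rintro ⟨hyu, hCux, hCvx, hxvt⟩
        have hyu' : y.1 = u := congrArg Subtype.val hyu
        refine hn2 ⟨hyu', (hCu x).mp hCux |>.2.elim id (fun _ => by rw [← hyu']; exact hxy.symm), ?_, ?_⟩
        · exact fun h => hCvx ((hCv x).mpr h)
        · exact fun h => hxvt (Subtype.ext h)
    · refine Or.inr (Or.inl ⟨Subtype.ext hxv, ?_, ?_, ?_⟩)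
      · exact (hCu y).mpr ⟨G.ne_of_adj hNy.1, Or.inl hNy.1⟩
      · exact fun h => hNy.2.1 ((hCv y).mp h)
      · exact fun h => hNy.2.2 (congrArg Subtype.val h)
    · refine Or.inr (Or.inr ⟨Subtype.ext hyv, ?_, ?_, ?_⟩)
      · exact (hCu x).mpr ⟨G.ne_of_adj hNx.1, Or.inl hNx.1⟩
      · exact fun h => hNx.2.1 ((hCv x).mp h)
      · exact fun h => hNx.2.2 (congrArg Subtype.val h)
  · -- x sits over v, and a ~ y in compress G
    rcases hG'ay with ⟨hay, -, hn2⟩ | ⟨hav, -⟩ | ⟨hyv', hNa⟩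
    · have hyu : y.1 ≠ u := fun h => hn2 ⟨h, ha1, ha2, ha3⟩
      by_cases hGvy : G.Adj v y.1
      · refine Or.inl ⟨⟨hne, Or.inl (by rw [hxv]; exact hGvy)⟩, ?_, ?_⟩
        · rintro ⟨hxu, -⟩
          exact huv ((congrArg Subtype.val hxu).symm.trans hxv)
        · rintro ⟨hyu', -⟩
          exact hyu (congrArg Subtype.val hyu')
      · refine Or.inr (Or.inl ⟨Subtype.ext hxv, ?_, ?_, ?_⟩)
        · exact (hCu y).mpr ⟨Ne.symm hyu, Or.inr hay⟩
        · exact fun h => hGvy ((hCv y).mp h)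
        · intro h
          exact hne (hxv.trans (congrArg Subtype.val h).symm)
    · exact absurd hav ha3
    · exact absurd (hxv.trans hyv'.symm) hne
  · -- y sits over v, and a ~ x in compress G
    rcases hG'ax with ⟨hax, -, hn2⟩ | ⟨hav, -⟩ | ⟨hxv', hNa⟩
    · have hxu : x.1 ≠ u := fun h => hn2 ⟨h, ha1, ha2, ha3⟩
      by_cases hGvx : G.Adj v x.1
      · refine Or.inl ⟨⟨hne, Or.inl (by rw [hyv]; exact hGvx.symm)⟩, ?_, ?_⟩
        · rintro ⟨hxu', -⟩
          exact hxu (congrArg Subtype.val hxu')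
        · rintro ⟨hyu, -⟩
          exact huv ((congrArg Subtype.val hyu).symm.trans hyv)
      · refine Or.inr (Or.inr ⟨Subtype.ext hyv, ?_, ?_, ?_⟩)
        · exact (hCu x).mpr ⟨Ne.symm hxu, Or.inr hax⟩
        · exact fun h => hGvx ((hCv x).mp h)
        · intro h
          exact hne ((congrArg Subtype.val h).trans hyv.symm)
    · exact absurd hav ha3
    · exact absurd (hxv'.trans hyv.symm) hne

theorem compress_eq (G : SimpleGraph V) {u v : V}
    (h : ∀ z, G.Adj u z → ¬G.Adj v z → z = v) (x y : V) :
    (G.compress u v).Adj x y ↔ G.Adj x y := by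
  constructor
  · rintro (⟨h1, -, -⟩ | ⟨hxv, hGuy, hGvy, hyv⟩ | ⟨hyv, hGux, hGvx, hxv⟩)
    · exact h1
    · exact absurd (h y hGuy hGvy) hyv
    · exact absurd (h x hGux hGvx) hxv
  · intro hxy
    refine Or.inl ⟨hxy, ?_, ?_⟩
    · rintro ⟨-, hGuy, hGvy, hyv⟩; exact hyv (h y hGuy hGvy)
    · rintro ⟨-, hGux, hGvx, hxv⟩; exact hxv (h x hGux hGvx)

end ChromAux
end Part2
section Part3
open Polynomial
namespace ChromAux

universe uv

theorem comp : ∀ (N : ℕ) {V : Type uv} [Fintype V] [DecidableEq V]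
    (G : SimpleGraph V), ∀ [DecidableRel G.Adj], ∀ (u v : V), u ≠ v → μ G ≤ N →
    ∀ (p p' : ℤ[X]), (∀ k : ℕ, p.eval (k : ℤ) = G.numColorings k) →
    (∀ k : ℕ, p'.eval (k : ℤ) = (G.compress u v).numColorings k) →
    ∀ i, (-1 : ℤ) ^ (Fintype.card V + i) * p'.coeff i
      ≤ (-1 : ℤ) ^ (Fintype.card V + i) * p.coeff i := by
  intro N
  induction N using Nat.strong_induction_on with
  | _ N ih =>
    intro V _ _ G _ u v huv hμ p p' hp hp' i
    by_cases hA : ∃ z, G.Adj u z ∧ ¬G.Adj v z ∧ z ≠ v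
    · obtain ⟨a, ha1, ha2, ha3⟩ := hA
      have hua : u ≠ a := G.ne_of_adj ha1
      have hva : v ≠ a := Ne.symm ha3
      have hG'va : (G.compress u v).Adj v a := Or.inr (Or.inl ⟨rfl, ha1, ha2, ha3⟩)
      obtain ⟨q, hq, -⟩ := exists_chrom (μ (del G u a)) (del G u a) le_rfl
      obtain ⟨r, hr, hr2⟩ := exists_chrom (μ (con G u a)) (con G u a) le_rfl
      obtain ⟨q', hq', -⟩ := exists_chrom (μ (del (G.compress u v) v a))
        (del (G.compress u v) v a) le_rfl
      obtain ⟨r', hr', hr2'⟩ := exists_chrom (μ (con (G.compress u v) v a))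
        (con (G.compress u v) v a) le_rfl
      obtain ⟨s, hs, -⟩ := exists_chrom (μ ((con G u a).compress ⟨u, hua⟩ ⟨v, hva⟩))
        ((con G u a).compress ⟨u, hua⟩ ⟨v, hva⟩) le_rfl
      have hpeq : p = q - r := poly_unique fun k => by
        rw [hp, eval_sub, hq, hr]
        have hc := count_del G ha1 k
        have hz : ((del G u a).numColorings k : ℤ)
            = (G.numColorings k : ℤ) + ((con G u a).numColorings k : ℤ) := by
          exact_mod_cast congrArg (Nat.cast : ℕ → ℤ) hc
        linarith
      have hpeq' : p' = q' - r' := poly_unique fun k => by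
        rw [hp', eval_sub, hq', hr']
        have hc := count_del (G.compress u v) hG'va k
        have hz : ((del (G.compress u v) v a).numColorings k : ℤ)
            = ((G.compress u v).numColorings k : ℤ)
              + ((con (G.compress u v) v a).numColorings k : ℤ) := by
          exact_mod_cast congrArg (Nat.cast : ℕ → ℤ) hc
        linarith
      have hq'q : (-1 : ℤ) ^ (Fintype.card V + i) * q'.coeff i
          ≤ (-1 : ℤ) ^ (Fintype.card V + i) * q.coeff i := by
        refine ih (μ (del G u a))
          (lt_of_lt_of_le (by unfold μ; have := m_del_lt G ha1; omega) hμ)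
          (del G u a) u v huv le_rfl q q' hq ?_ i
        intro k
        rw [hq']
        exact_mod_cast numColorings_congr (fun x y => F2 G huv ha1 ha2 ha3 x y) k
      have hr's : (-1 : ℤ) ^ (Fintype.card {z : V // z ≠ a} + i) * r'.coeff i
          ≤ (-1 : ℤ) ^ (Fintype.card {z : V // z ≠ a} + i) * s.coeff i :=
        mono (m ((con G u a).compress ⟨u, hua⟩ ⟨v, hva⟩)) _ _ le_rfl
          (fun x y => F3 G huv ha1 ha2 ha3 x y) r' s hr' hs i
      have hsr : (-1 : ℤ) ^ (Fintype.card {z : V // z ≠ a} + i) * s.coeff i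
          ≤ (-1 : ℤ) ^ (Fintype.card {z : V // z ≠ a} + i) * r.coeff i :=
        ih (μ (con G u a)) (lt_of_lt_of_le (μ_con_lt G ha1) hμ) (con G u a)
          ⟨u, hua⟩ ⟨v, hva⟩ (fun hc => huv (congrArg Subtype.val hc)) le_rfl r s hr hs i
      have hsign : (-1 : ℤ) ^ (Fintype.card V + i)
          = -(-1 : ℤ) ^ (Fintype.card {z : V // z ≠ a} + i) := by
        rw [← card_subtype_ne a, show Fintype.card {z : V // z ≠ a} + 1 + i
          = (Fintype.card {z : V // z ≠ a} + i) + 1 from by omega, pow_succ]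
        ring
      rw [hpeq, hpeq', coeff_sub, coeff_sub, mul_sub, mul_sub]
      have h4 : (-1 : ℤ) ^ (Fintype.card V + i) * r.coeff i
          ≤ (-1 : ℤ) ^ (Fintype.card V + i) * r'.coeff i := by
        rw [hsign]
        linarith
      linarith
    · push_neg at hA
      have : p' = p := poly_unique fun k => by
        rw [hp, hp']
        exact_mod_cast numColorings_congr (fun x y => compress_eq G hA x y) k
      rw [this]

end ChromAux
end Part3

/-- Compression does not increase the absolute values of the chromatic coefficients:
if `G'` is the compression of `G` from `u` to `v`, then `|c_i(G')| ≤ |c_i(G)|` for all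
`0 ≤ i ≤ n`. -/
theorem compress_chromaticPolynomial_coeff_le {V : Type*} [Fintype V] [DecidableEq V]
    (G : SimpleGraph V) [DecidableRel G.Adj] (u v : V) (huv : u ≠ v)
    (P P' : Polynomial ℤ)
    (hP : ∀ k : ℕ, P.eval (k : ℤ) = G.numColorings k)
    (hP' : ∀ k : ℕ, P'.eval (k : ℤ) = (G.compress u v).numColorings k) :
    ∀ i ≤ Fintype.card V, |P'.coeff i| ≤ |P.coeff i| := by
  intro i _
  obtain ⟨p, hp0, hp2⟩ := ChromAux.exists_chrom (ChromAux.μ G) G le_rfl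
  obtain ⟨p1, hp10, hp12⟩ := ChromAux.exists_chrom (ChromAux.μ (G.compress u v))
    (G.compress u v) le_rfl
  have hPp : P = p := ChromAux.poly_unique fun k => by rw [hP k, hp0 k]
  have hP'p : P' = p1 := ChromAux.poly_unique fun k => by rw [hP' k, hp10 k]
  have hle := ChromAux.comp (ChromAux.μ G) G u v huv le_rfl P P' hP hP' i
  have h1 : 0 ≤ (-1 : ℤ) ^ (Fintype.card V + i) * P.coeff i := by
    rw [hPp]; exact hp2 i
  have h2 : 0 ≤ (-1 : ℤ) ^ (Fintype.card V + i) * P'.coeff i := by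
    rw [hP'p]; exact hp12 i
  have habs : ∀ (x : ℤ) (n : ℕ), |(-1 : ℤ) ^ n * x| = |x| := fun x n => by
    rw [abs_mul, abs_pow, abs_neg, abs_one, one_pow, one_mul]
  calc |P'.coeff i| = |(-1 : ℤ) ^ (Fintype.card V + i) * P'.coeff i| := (habs _ _).symm
    _ = (-1 : ℤ) ^ (Fintype.card V + i) * P'.coeff i := abs_of_nonneg h2
    _ ≤ (-1 : ℤ) ^ (Fintype.card V + i) * P.coeff i := hle
    _ = |(-1 : ℤ) ^ (Fintype.card V + i) * P.coeff i| := (abs_of_nonneg h1).symm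
    _ = |P.coeff i| := habs _ _
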